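/- For positive integers n, k, x with 2 ≤ x ≤ n−k−x, let B_k(x, n−k−x) be the bipartite graph obtained from the complete bipartite graph K_{x, n−k−x} by attaching k pendent vertices to a single vertex of degree n−k−x (a vertex in the part of size x). Then the Wiener index of B_k(x, n−k−x) equals x² + (2k−n)x + n² − n − 2k. -/
import Mathlib


open Finset
open scoped Classical

/-- Wiener index: sum of distances over unordered pairs of vertices. -/
noncomputable def wiener {V : Type*} [Fintype V] (G : SimpleGraph V) : ℚ :=
  (1/2) * ∑ u : V, ∑ v : V, (G.dist u v : ℚ)

/-- Harary index: sum of reciprocal distances over unordered pairs of distinct vertices. -/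
noncomputable def harary {V : Type*} [Fintype V] (G : SimpleGraph V) : ℚ :=
  (1/2) * ∑ p ∈ Finset.univ.offDiag, (1 : ℚ) / (G.dist p.1 p.2 : ℚ)

/-- Hyper-Wiener index: (1/2) Σ_{unordered pairs} (d + d²). -/
noncomputable def hyperWiener {V : Type*} [Fintype V] (G : SimpleGraph V) : ℚ :=
  (1/4) * ∑ u : V, ∑ v : V, ((G.dist u v : ℚ) + (G.dist u v : ℚ)^2)

/-- Eccentricity of a vertex: maximum distance to any other vertex. -/
noncomputable def ecc {V : Type*} [Fintype V] (G : SimpleGraph V) (u : V) : ℕ :=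
  Finset.univ.sup (fun v => G.dist u v)

/-- Connective eccentricity index: Σ_u deg(u)/ε(u). -/
noncomputable def cei {V : Type*} [Fintype V] (G : SimpleGraph V) : ℚ :=
  ∑ u : V, (G.degree u : ℚ) / (ecc G u : ℚ)

/-- Eccentricity distance sum: Σ_u ε(u)·D(u). -/
noncomputable def eds {V : Type*} [Fintype V] (G : SimpleGraph V) : ℚ :=
  ∑ u : V, (ecc G u : ℚ) * ∑ v : V, (G.dist u v : ℚ)

/-- `Bgraph x y k w`: the bipartite graph obtained from the complete bipartite graph
`K_{x,y}` (parts `Fin x` and `Fin y`) by attaching `k` pendant vertices to the vertex `w`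
of the part of size `x`. With `y = n - k - x` this is the graph `B_k(x, n-k-x)`. -/
def Bgraph (x y k : ℕ) (w : Fin x) : SimpleGraph ((Fin x ⊕ Fin y) ⊕ Fin k) :=
  SimpleGraph.fromRel (fun p q =>
    (∃ i j, p = Sum.inl (Sum.inl i) ∧ q = Sum.inl (Sum.inr j)) ∨
    (∃ m, p = Sum.inr m ∧ q = Sum.inl (Sum.inl w)))

lemma dist_eq_two' {V : Type*} {G : SimpleGraph V} {u v : V} (hne : u ≠ v)
    (hna : ¬ G.Adj u v) {z : V} (h1 : G.Adj u z) (h2 : G.Adj z v) : G.dist u v = 2 := by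
  let wk : G.Walk u v := .cons h1 (.cons h2 .nil)
  have hle : G.dist u v ≤ 2 := SimpleGraph.dist_le wk
  have h0 : G.dist u v ≠ 0 := by
    have := (wk.reachable).pos_dist_of_ne hne
    omega
  have h1' : G.dist u v ≠ 1 := fun h => hna (SimpleGraph.dist_eq_one_iff_adj.mp h)
  omega

section
variable {x y k : ℕ} {w : Fin x}

local notation "A" i => (Sum.inl (Sum.inl i) : (Fin x ⊕ Fin y) ⊕ Fin k)
local notation "B" j => (Sum.inl (Sum.inr j) : (Fin x ⊕ Fin y) ⊕ Fin k)
local notation "P" m => (Sum.inr m : (Fin x ⊕ Fin y) ⊕ Fin k)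

lemma adj_AB (i : Fin x) (j : Fin y) : (Bgraph x y k w).Adj (A i) (B j) := by
  simp [Bgraph]
lemma adj_PW (m : Fin k) : (Bgraph x y k w).Adj (P m) (A w) := by
  simp [Bgraph]
lemma not_adj_AA (i i' : Fin x) : ¬ (Bgraph x y k w).Adj (A i) (A i') := by
  simp [Bgraph]
lemma not_adj_BB (j j' : Fin y) : ¬ (Bgraph x y k w).Adj (B j) (B j') := by
  simp [Bgraph]
lemma not_adj_PP (m m' : Fin k) : ¬ (Bgraph x y k w).Adj (P m) (P m') := by
  simp [Bgraph]
lemma not_adj_PB (m : Fin k) (j : Fin y) : ¬ (Bgraph x y k w).Adj (P m) (B j) := by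
  simp [Bgraph]
lemma adj_P_only (m : Fin k) (v : (Fin x ⊕ Fin y) ⊕ Fin k) :
    (Bgraph x y k w).Adj (P m) v → v = (A w) := by
  simp [Bgraph]

lemma dist_AB (i : Fin x) (j : Fin y) : (Bgraph x y k w).dist (A i) (B j) = 1 :=
  SimpleGraph.dist_eq_one_iff_adj.mpr (adj_AB i j)

lemma dist_AA (j : Fin y) {i i' : Fin x} (h : i ≠ i') :
    (Bgraph x y k w).dist (A i) (A i') = 2 :=
  dist_eq_two' (by simp [h]) (not_adj_AA i i') (adj_AB i j) ((adj_AB i' j).symm)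

lemma dist_BB (i : Fin x) {j j' : Fin y} (h : j ≠ j') :
    (Bgraph x y k w).dist (B j) (B j') = 2 :=
  dist_eq_two' (by simp [h]) (not_adj_BB j j') ((adj_AB i j).symm) (adj_AB i j')

lemma dist_PP {m m' : Fin k} (h : m ≠ m') :
    (Bgraph x y k w).dist (P m) (P m') = 2 :=
  dist_eq_two' (by simp [h]) (not_adj_PP m m') (adj_PW m) ((adj_PW m').symm)

lemma dist_PW (m : Fin k) : (Bgraph x y k w).dist (P m) (A w) = 1 :=
  SimpleGraph.dist_eq_one_iff_adj.mpr (adj_PW m)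

lemma dist_PB (m : Fin k) (j : Fin y) :
    (Bgraph x y k w).dist (P m) (B j) = 2 :=
  dist_eq_two' (by simp) (not_adj_PB m j) (adj_PW m) (adj_AB w j)

lemma dist_PA (j : Fin y) (m : Fin k) {i : Fin x} (h : i ≠ w) :
    (Bgraph x y k w).dist (P m) (A i) = 3 := by
  have hle : (Bgraph x y k w).dist (P m) (A i) ≤ 3 := by
    let wk : (Bgraph x y k w).Walk (P m) (A i) :=
      .cons (adj_PW m) (.cons (adj_AB w j) (.cons ((adj_AB i j).symm) .nil))
    exact SimpleGraph.dist_le wk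
  have h0 : (Bgraph x y k w).dist (P m) (A i) ≠ 0 := by
    let wk : (Bgraph x y k w).Walk (P m) (A i) :=
      .cons (adj_PW m) (.cons (adj_AB w j) (.cons ((adj_AB i j).symm) .nil))
    have := (wk.reachable).pos_dist_of_ne (by simp)
    omega
  obtain ⟨p, hp⟩ := SimpleGraph.exists_walk_of_dist_ne_zero h0
  cases p with
  | cons hadj q =>
    rename_i z
    have hz : z = (A w) := adj_P_only _ _ hadj
    subst hz
    have h2 : (Bgraph x y k w).dist (A w) (A i) = 2 := dist_AA j h.symm
    have := SimpleGraph.dist_le q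
    simp [SimpleGraph.Walk.length_cons] at hp
    omega

end


/-- Wiener index of `B_k(x, n-k-x)` (here `y = n - k - x`). -/
theorem wiener_Bgraph (n k x y : ℕ) (hn : n = x + y + k) (hk : 1 ≤ k)
    (hx : 2 ≤ x) (hxy : x ≤ y) (w : Fin x) :
    wiener (Bgraph x y k w)
      = (x : ℚ)^2 + (2 * (k : ℚ) - n) * x + (n : ℚ)^2 - n - 2 * k := by
  have hy : 2 ≤ y := le_trans hx hxy
  set G := Bgraph x y k w with hG
  have j0 : Fin y := ⟨0, by omega⟩
  have i0 : Fin x := ⟨0, by omega⟩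
  -- row sums
  have hAA : ∀ i : Fin x, ∑ i' : Fin x, (G.dist (Sum.inl (Sum.inl i)) (Sum.inl (Sum.inl i')) : ℚ)
      = 2 * x - 2 := by
    intro i
    have key : ∀ i' : Fin x, (G.dist (Sum.inl (Sum.inl i)) (Sum.inl (Sum.inl i')) : ℚ)
        = 2 - (if i = i' then 2 else 0) := by
      intro i'
      by_cases h : i = i'
      · subst h; simp [SimpleGraph.dist_self]
      · rw [hG, dist_AA j0 h]; simp [h]
    simp only [key, Finset.sum_sub_distrib, Finset.sum_const, Finset.sum_ite_eq,
      Finset.card_univ, Fintype.card_fin, Finset.mem_univ, if_true]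
    push_cast; ring
  have hAB : ∀ i : Fin x, ∑ j : Fin y, (G.dist (Sum.inl (Sum.inl i)) (Sum.inl (Sum.inr j)) : ℚ)
      = y := by
    intro i
    simp [hG, dist_AB]
  have hAP : ∀ i : Fin x, ∑ m : Fin k, (G.dist (Sum.inl (Sum.inl i)) (Sum.inr m) : ℚ)
      = 3 * (k : ℚ) - (if i = w then 2 * (k : ℚ) else 0) := by
    intro i
    by_cases h : i = w
    · have : ∀ m : Fin k, (G.dist (Sum.inl (Sum.inl i)) (Sum.inr m) : ℚ) = 1 := by
        intro m; rw [hG, SimpleGraph.dist_comm, h, dist_PW]; norm_num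
      simp only [this, Finset.sum_const, Finset.card_univ, Fintype.card_fin, if_pos h]
      push_cast; ring
    · have : ∀ m : Fin k, (G.dist (Sum.inl (Sum.inl i)) (Sum.inr m) : ℚ) = 3 := by
        intro m; rw [hG, SimpleGraph.dist_comm, dist_PA j0 m h]; norm_num
      simp only [this, Finset.sum_const, Finset.card_univ, Fintype.card_fin, if_neg h]
      push_cast; ring
  have hBA : ∀ j : Fin y, ∑ i : Fin x, (G.dist (Sum.inl (Sum.inr j)) (Sum.inl (Sum.inl i)) : ℚ)
      = x := by
    intro j
    have : ∀ i : Fin x, (G.dist (Sum.inl (Sum.inr j)) (Sum.inl (Sum.inl i)) : ℚ) = 1 := by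
      intro i; rw [hG, SimpleGraph.dist_comm, dist_AB]; norm_num
    simp [this]
  have hBB : ∀ j : Fin y, ∑ j' : Fin y, (G.dist (Sum.inl (Sum.inr j)) (Sum.inl (Sum.inr j')) : ℚ)
      = 2 * y - 2 := by
    intro j
    have key : ∀ j' : Fin y, (G.dist (Sum.inl (Sum.inr j)) (Sum.inl (Sum.inr j')) : ℚ)
        = 2 - (if j = j' then 2 else 0) := by
      intro j'
      by_cases h : j = j'
      · subst h; simp [SimpleGraph.dist_self]
      · rw [hG, dist_BB i0 h]; simp [h]
    simp only [key, Finset.sum_sub_distrib, Finset.sum_const, Finset.sum_ite_eq,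
      Finset.card_univ, Fintype.card_fin, Finset.mem_univ, if_true]
    push_cast; ring
  have hBP : ∀ j : Fin y, ∑ m : Fin k, (G.dist (Sum.inl (Sum.inr j)) (Sum.inr m) : ℚ)
      = 2 * k := by
    intro j
    have : ∀ m : Fin k, (G.dist (Sum.inl (Sum.inr j)) (Sum.inr m) : ℚ) = 2 := by
      intro m; rw [hG, SimpleGraph.dist_comm, dist_PB]; norm_num
    simp [this]; ring
  have hPA : ∀ m : Fin k, ∑ i : Fin x, (G.dist (Sum.inr m) (Sum.inl (Sum.inl i)) : ℚ)
      = 3 * x - 2 := by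
    intro m
    have key : ∀ i : Fin x, (G.dist (Sum.inr m) (Sum.inl (Sum.inl i)) : ℚ)
        = 3 - (if w = i then 2 else 0) := by
      intro i
      by_cases h : w = i
      · rw [hG, ← h, dist_PW]; norm_num
      · rw [hG, dist_PA j0 m (Ne.symm h)]; simp [h]
    simp only [key, Finset.sum_sub_distrib, Finset.sum_const, Finset.sum_ite_eq,
      Finset.card_univ, Fintype.card_fin, Finset.mem_univ, if_true]
    push_cast; ring
  have hPB : ∀ m : Fin k, ∑ j : Fin y, (G.dist (Sum.inr m) (Sum.inl (Sum.inr j)) : ℚ)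
      = 2 * y := by
    intro m
    have : ∀ j : Fin y, (G.dist (Sum.inr m) (Sum.inl (Sum.inr j)) : ℚ) = 2 := by
      intro j; rw [hG, dist_PB]; norm_num
    simp [this]; ring
  have hPP : ∀ m : Fin k, ∑ m' : Fin k, (G.dist (Sum.inr m) (Sum.inr m') : ℚ)
      = 2 * k - 2 := by
    intro m
    have key : ∀ m' : Fin k, (G.dist (Sum.inr m) (Sum.inr m') : ℚ)
        = 2 - (if m = m' then 2 else 0) := by
      intro m'
      by_cases h : m = m'
      · subst h; simp [SimpleGraph.dist_self]
      · rw [hG, dist_PP h]; simp [h]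
    simp only [key, Finset.sum_sub_distrib, Finset.sum_const, Finset.sum_ite_eq,
      Finset.card_univ, Fintype.card_fin, Finset.mem_univ, if_true]
    push_cast; ring
  rw [wiener]
  rw [Fintype.sum_sum_type]
  simp only [Fintype.sum_sum_type, hAA, hAB, hAP, hBA, hBB, hBP, hPA, hPB, hPP]
  simp only [Finset.sum_add_distrib, Finset.sum_sub_distrib, Finset.sum_const,
    Finset.sum_ite_eq, Finset.card_univ, Fintype.card_fin, Finset.mem_univ, if_true,
    nsmul_eq_mul]
  have hw : ∑ i : Fin x, (if i = w then 2 * (k : ℚ) else 0) = 2 * k := by simp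
  rw [hw]
  subst hn
  push_cast
  ring
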